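/- For every integer m ≥ 1 and every complex number z with Re(z) > 0, the series ∑_{k=m}^{∞} c(k,m)/((z+1)(z+2)⋯(z+k)) converges and its sum equals z^{−m}. -/

import Mathlib

/-- The Stirling cycle number `c(n,k)`: the number of permutations of an
`n`-element set whose decomposition into disjoint cycles (counting fixed
points as cycles) consists of exactly `k` cycles. -/
noncomputable def stirlingCycle (n k : ℕ) : ℕ :=
  Nat.card {σ : Equiv.Perm (Fin n) //
    σ.cycleType.card + Nat.card {x : Fin n // σ x = x} = k}

section Combinatorics
set_option linter.unusedSectionVars false
open Equiv Equiv.Perm Finset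


variable {α : Type*} [DecidableEq α] [Fintype α]

lemma isCycle_swap_mul_of_fixed {c : Perm α} (hc : c.IsCycle) {a b : α}
    (ha : c a = a) (hb : c b ≠ b) : IsCycle (swap a b * c) := by
  have hab : a ≠ b := by rintro rfl; exact hb ha
  set g := swap a b * c with hg
  have hga : g a = b := by simp [hg, ha]
  have hstep : ∀ x, c x ≠ x → c x ≠ b → g x = c x := by
    intro x hx hxb
    have hca : c x ≠ a := by
      intro h
      have hxa : x = a := c.injective (by rw [h, ha])
      exact hx (by rw [hxa, ha])
    simp [hg, swap_apply_of_ne_of_ne hca hxb]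
  have key : ∀ k : ℕ, SameCycle g a ((c ^ k) b) := by
    intro k
    induction k with
    | zero => exact ⟨1, by simpa using hga⟩
    | succ k ih =>
      set x := (c ^ k) b with hx
      have hxsupp : c x ≠ x := by
        have : x ∈ c.support := by
          rw [hx, pow_apply_mem_support]
          exact mem_support.2 hb
        exact mem_support.1 this
      have hrw : (c ^ (k + 1)) b = c x := by rw [pow_succ', Perm.mul_apply, ← hx]
      by_cases hcx : c x = b
      · rw [hrw, hcx]
        exact ⟨1, by simpa using hga⟩
      · rw [hrw, ← hstep x hxsupp hcx]
        exact ih.apply_right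
  refine ⟨a, ?_, fun y hy => ?_⟩
  · rw [hga]; exact fun h => hab h.symm
  · by_cases hya : y = a
    · subst hya; exact SameCycle.refl _ _
    · have hcy : c y ≠ y := by
        intro h
        apply hy
        by_cases hyb : y = b
        · exact absurd (hyb ▸ h) hb
        · simp [hg, h, swap_apply_of_ne_of_ne hya hyb]
      obtain ⟨i, _, _, hi⟩ := (hc.sameCycle hb hcy).exists_pow_eq c
      exact hi ▸ key i


/-- merging a fixed point into an existing cycle keeps the number of cycles. -/
lemma card_cycleType_swap_mul_merge {σ : Perm α} {a b : α}
    (ha : σ a = a) (hb : σ b ≠ b) :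
    Multiset.card (swap a b * σ).cycleType = Multiset.card σ.cycleType := by
  have hab : a ≠ b := by rintro rfl; exact hb ha
  set c := σ.cycleOf b with hcdef
  have hc : c ∈ σ.cycleFactorsFinset := cycleOf_mem_cycleFactorsFinset_iff.2 (mem_support.2 hb)
  have hcyc : c.IsCycle := isCycle_cycleOf σ hb
  have hcb : c b ≠ b := by rw [hcdef, cycleOf_apply_self]; exact hb
  have hca : c a = a := by
    by_contra h
    have : a ∈ σ.support := mem_cycleFactorsFinset_support_le hc (mem_support.2 h)
    exact (mem_support.1 this) ha
  set τ := σ * c⁻¹ with hτdef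
  have hd : Perm.Disjoint τ c := disjoint_mul_inv_of_mem_cycleFactorsFinset hc
  have hστ : σ = τ * c := by rw [hτdef]; group
  have hτa : τ a = a := by
    have : c⁻¹ a = a := by rw [Perm.inv_eq_iff_eq, hca]
    rw [hτdef, Perm.mul_apply, this, ha]
  have hτb : τ b = b := (hd b).resolve_right hcb
  have hdisj1 : Perm.Disjoint (swap a b) τ := by
    intro x
    by_cases hxa : x = a
    · exact Or.inr (hxa ▸ hτa)
    by_cases hxb : x = b
    · exact Or.inr (hxb ▸ hτb)
    · exact Or.inl (swap_apply_of_ne_of_ne hxa hxb)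
  have hcomm : swap a b * σ = τ * (swap a b * c) := by
    rw [hστ, ← mul_assoc, hdisj1.commute.eq, mul_assoc]
  have hcyc2 : IsCycle (swap a b * c) := isCycle_swap_mul_of_fixed hcyc hca hcb
  have hdisj2 : Perm.Disjoint τ (swap a b * c) := by
    intro x
    by_cases hτx : τ x = x
    · exact Or.inl hτx
    · refine Or.inr ?_
      have hcx : c x = x := (hd x).resolve_left hτx
      have hxa : x ≠ a := fun h => hτx (h ▸ hτa)
      have hxb : x ≠ b := fun h => hτx (h ▸ hτb)
      rw [Perm.mul_apply, hcx, swap_apply_of_ne_of_ne hxa hxb]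
  rw [hcomm, Perm.Disjoint.cycleType_mul hdisj2, hστ, Perm.Disjoint.cycleType_mul hd]
  simp [hcyc2.cycleType, hcyc.cycleType]

/-- multiplying by a swap of two fixed points adds one cycle. -/
lemma card_cycleType_swap_mul_new {σ : Perm α} {a b : α} (hab : a ≠ b)
    (ha : σ a = a) (hb : σ b = b) :
    Multiset.card (swap a b * σ).cycleType = Multiset.card σ.cycleType + 1 := by
  have hdisj : Perm.Disjoint (swap a b) σ := by
    intro x
    by_cases hxa : x = a
    · exact Or.inr (hxa ▸ ha)
    by_cases hxb : x = b
    · exact Or.inr (hxb ▸ hb)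
    · exact Or.inl (swap_apply_of_ne_of_ne hxa hxb)
  rw [Perm.Disjoint.cycleType_mul hdisj]
  simp [(isCycle_swap hab).cycleType, add_comm]


lemma swap_mul_fixed_iff {σ : Perm α} {a b : α} (hab : a ≠ b) (ha : σ a = a) (x : α) :
    (swap a b * σ) x = x ↔ (σ x = x ∧ x ≠ a ∧ x ≠ b) := by
  constructor
  · intro h
    rw [Perm.mul_apply] at h
    apply_fun (swap a b) at h
    rw [swap_apply_self] at h
    by_cases hxa : x = a
    · rw [hxa, ha, swap_apply_left] at h; exact absurd h hab
    by_cases hxb : x = b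
    · rw [hxb, swap_apply_right] at h
      exact absurd (σ.injective (h.trans ha.symm)).symm hab
    · rw [swap_apply_of_ne_of_ne hxa hxb] at h
      exact ⟨h, hxa, hxb⟩
  · rintro ⟨h1, h2, h3⟩
    rw [Perm.mul_apply, h1, swap_apply_of_ne_of_ne h2 h3]

lemma nfix_swap_mul_merge {σ : Perm α} {a b : α} (ha : σ a = a) (hb : σ b ≠ b) :
    Nat.card {x // (swap a b * σ) x = x} + 1 = Nat.card {x // σ x = x} := by
  have hab : a ≠ b := by rintro rfl; exact hb ha
  simp only [Nat.card_eq_fintype_card, Fintype.card_subtype]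
  have hset : univ.filter (fun x => (swap a b * σ) x = x)
      = (univ.filter fun x => σ x = x).erase a := by
    ext x
    simp only [mem_filter, mem_univ, true_and, mem_erase, swap_mul_fixed_iff hab ha]
    constructor
    · rintro ⟨h1, h2, h3⟩; exact ⟨h2, h1⟩
    · rintro ⟨h2, h1⟩
      refine ⟨h1, h2, ?_⟩
      rintro rfl; exact hb h1
  rw [hset, Finset.card_erase_add_one (by simp [ha])]

lemma nfix_swap_mul_new {σ : Perm α} {a b : α} (hab : a ≠ b) (ha : σ a = a) (hb : σ b = b) :
    Nat.card {x // (swap a b * σ) x = x} + 2 = Nat.card {x // σ x = x} := by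
  simp only [Nat.card_eq_fintype_card, Fintype.card_subtype]
  have hset : univ.filter (fun x => (swap a b * σ) x = x)
      = ((univ.filter fun x => σ x = x).erase a).erase b := by
    ext x
    simp only [mem_filter, mem_univ, true_and, mem_erase, swap_mul_fixed_iff hab ha]
    tauto
  have hbmem : b ∈ (univ.filter fun x => σ x = x).erase a := by
    simp [hb, Ne.symm hab]
  have h1 : (univ.filter (fun x => (swap a b * σ) x = x)).card + 1
      = ((univ.filter fun x => σ x = x).erase a).card := by
    rw [hset, Finset.card_erase_add_one hbmem]
  have h2 : ((univ.filter fun x => σ x = x).erase a).card + 1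
      = (univ.filter fun x => σ x = x).card :=
    Finset.card_erase_add_one (by simp [ha])
  omega

noncomputable def ncyc {α : Type*} [DecidableEq α] [Fintype α] (σ : Perm α) : ℕ :=
  Multiset.card σ.cycleType + Nat.card {x // σ x = x}

variable {α : Type*} [DecidableEq α] [Fintype α]

lemma optionCongr_eq_extendDomain (e : Perm α) :
    e.optionCongr = e.extendDomain (Equiv.optionIsSomeEquiv α).symm := by
  ext o
  cases o with
  | none =>
    rw [Perm.extendDomain_apply_not_subtype]
    · simp
    · simp
  | some a =>
    have : (some a : Option α) = ((Equiv.optionIsSomeEquiv α).symm a : {o : Option α // o.isSome = true}) := rfl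
    rw [this, Perm.extendDomain_apply_image]
    simp [Equiv.optionIsSomeEquiv]

lemma ncyc_optionCongr (e : Perm α) : ncyc (e.optionCongr) = ncyc e + 1 := by
  have h1 : cycleType (e.optionCongr) = e.cycleType := by
    rw [optionCongr_eq_extendDomain, cycleType_extendDomain]
  have h2 : Nat.card {o : Option α // e.optionCongr o = o} = Nat.card {x // e x = x} + 1 := by
    have eqv : {o : Option α // e.optionCongr o = o} ≃ Option {x : α // e x = x} :=
      { toFun := fun x => match x with
          | ⟨none, _⟩ => none
          | ⟨some a, h⟩ => some ⟨a, by simpa using h⟩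
        invFun := fun x => match x with
          | none => ⟨none, rfl⟩
          | some ⟨a, h⟩ => ⟨some a, by simp [h]⟩
        left_inv := by rintro ⟨(_ | a), h⟩ <;> rfl
        right_inv := by rintro (_ | ⟨a, h⟩) <;> rfl }
    rw [Nat.card_congr eqv]
    simp [Nat.card_eq_fintype_card]
  rw [ncyc, ncyc, h1, h2]
  omega

lemma ncyc_permCongr {β : Type*} [DecidableEq β] [Fintype β] (f : α ≃ β) (σ : Perm α) :
    ncyc (f.permCongr σ) = ncyc σ := by
  have h1 : cycleType (f.permCongr σ) = σ.cycleType := by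
    have hext : σ.extendDomain (f.trans (Equiv.subtypeUnivEquiv fun _ : β => trivial).symm)
        = f.permCongr σ := by
      ext b
      rw [Perm.extendDomain_apply_subtype _ _ (trivial : (fun _ : β => True) b)]
      rfl
    rw [← hext, cycleType_extendDomain]
  have h2 : Nat.card {y : β // f.permCongr σ y = y} = Nat.card {x : α // σ x = x} := by
    refine (Nat.card_congr (f.subtypeEquiv fun a => ?_)).symm
    simp [Equiv.permCongr_apply]
  rw [ncyc, ncyc, h1, h2]

lemma ncyc_decompose (o : Option α) (e : Perm α) :
    ncyc (Equiv.Perm.decomposeOption.symm (o, e)) = ncyc e + (if o = none then 1 else 0) := by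
  rw [Equiv.Perm.decomposeOption_symm_apply]
  cases o with
  | none =>
    rw [if_pos rfl, swap_self]
    have : (Equiv.refl (Option α)) * e.optionCongr = e.optionCongr := by
      ext x; simp
    rw [this, ncyc_optionCongr]
  | some p =>
    simp only [reduceCtorEq, if_false, add_zero]
    have hnone : e.optionCongr none = none := rfl
    have hoc := ncyc_optionCongr e
    by_cases hp : e p = p
    · have hfix : e.optionCongr (some p) = some p := by simp [hp]
      have h1 := card_cycleType_swap_mul_new (σ := e.optionCongr)
        (a := none) (b := some p) (by simp) hnone hfix
      have h2 := nfix_swap_mul_new (σ := e.optionCongr)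
        (a := none) (b := some p) (by simp) hnone hfix
      simp only [ncyc] at hoc ⊢
      omega
    · have hnfix : e.optionCongr (some p) ≠ some p := by simp [hp]
      have h1 := card_cycleType_swap_mul_merge (σ := e.optionCongr)
        (a := none) (b := some p) hnone hnfix
      have h2 := nfix_swap_mul_merge (σ := e.optionCongr)
        (a := none) (b := some p) hnone hnfix
      simp only [ncyc] at hoc ⊢
      omega

lemma stirling_eq (n k : ℕ) :
    stirlingCycle n k = Nat.card {σ : Perm (Fin n) // ncyc σ = k} := rfl

lemma ncyc_le {α : Type*} [DecidableEq α] [Fintype α] (σ : Perm α) :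
    ncyc σ ≤ Fintype.card α := by
  have h1 : Multiset.card σ.cycleType ≤ σ.support.card := by
    rw [← sum_cycleType]
    have := Multiset.card_nsmul_le_sum (s := σ.cycleType) (a := 1)
      (fun x hx => (one_lt_of_mem_cycleType hx).le)
    simpa using this
  have h2 : Nat.card {x // σ x = x} = Fintype.card α - σ.support.card := by
    rw [Nat.card_eq_fintype_card, Fintype.card_subtype]
    have : univ.filter (fun x => σ x = x) = (σ.support)ᶜ := by
      ext x; simp [mem_support]
    rw [this, Finset.card_compl]
  have h3 : σ.support.card ≤ Fintype.card α := (card_le_univ _).trans (by simp)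
  rw [ncyc, h2]
  omega

lemma stirlingCycle_succ (n k : ℕ) :
    stirlingCycle (n + 1) (k + 1) = stirlingCycle n k + n * stirlingCycle n (k + 1) := by
  rw [stirling_eq, stirling_eq, stirling_eq]
  have e1 : {σ : Perm (Fin (n+1)) // ncyc σ = k+1} ≃ {σ : Perm (Option (Fin n)) // ncyc σ = k+1} :=
    ((finSuccEquiv n).permCongr).subtypeEquiv fun σ => by rw [ncyc_permCongr]
  have e2 : {σ : Perm (Option (Fin n)) // ncyc σ = k+1}
      ≃ {x : Option (Fin n) × Perm (Fin n) // ncyc x.2 + (if x.1 = none then 1 else 0) = k+1} :=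
    Equiv.Perm.decomposeOption.subtypeEquiv fun σ => by
      nth_rewrite 1 [← Equiv.symm_apply_apply Equiv.Perm.decomposeOption σ]
      rw [show (Equiv.Perm.decomposeOption σ)
        = ((Equiv.Perm.decomposeOption σ).1, (Equiv.Perm.decomposeOption σ).2) from rfl,
        ncyc_decompose]
  have e3 : {x : Option (Fin n) × Perm (Fin n) // ncyc x.2 + (if x.1 = none then 1 else 0) = k+1}
      ≃ Σ o : Option (Fin n), {e : Perm (Fin n) // ncyc e + (if o = none then 1 else 0) = k+1} :=
    Equiv.subtypeProdEquivSigmaSubtype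
      (fun (o : Option (Fin n)) (e : Perm (Fin n)) => ncyc e + (if o = none then 1 else 0) = k+1)
  rw [Nat.card_congr (e1.trans (e2.trans e3)), Nat.card_eq_fintype_card, Fintype.card_sigma,
    Fintype.sum_option]
  simp only [reduceIte, reduceCtorEq, if_false, add_zero]
  have h1 : Fintype.card {e : Perm (Fin n) // ncyc e + 1 = k + 1}
      = Nat.card {e : Perm (Fin n) // ncyc e = k} := by
    rw [Nat.card_eq_fintype_card]
    exact Fintype.card_congr (Equiv.subtypeEquivRight fun e => by omega)
  have h2 : ∀ b : Fin n, Fintype.card {e : Perm (Fin n) // ncyc e = k + 1}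
      = Nat.card {e : Perm (Fin n) // ncyc e = k + 1} := fun _ => (Nat.card_eq_fintype_card).symm
  rw [h1]
  simp [Nat.card_eq_fintype_card, Finset.sum_const, mul_comm]

lemma stirlingCycle_zero_zero : stirlingCycle 0 0 = 1 := by
  rw [stirling_eq, Nat.card_eq_fintype_card, Fintype.card_subtype]
  have : ∀ σ : Perm (Fin 0), ncyc σ = 0 := by
    intro σ
    have hσ : σ = 1 := Subsingleton.elim _ _
    subst hσ
    simp [ncyc, cycleType_one, Nat.card_eq_fintype_card]
  rw [Finset.filter_true_of_mem (fun σ _ => this σ), Finset.card_univ]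
  simp

lemma stirlingCycle_pos_zero (n : ℕ) (hn : 1 ≤ n) : stirlingCycle n 0 = 0 := by
  rw [stirling_eq]
  haveI : IsEmpty {σ : Perm (Fin n) // ncyc σ = 0} := by
    refine ⟨fun ⟨σ, hσ⟩ => ?_⟩
    rw [ncyc] at hσ
    have h1 : σ = 1 := card_cycleType_eq_zero.1 (by omega)
    subst h1
    have : Nat.card {x : Fin n // (1 : Perm (Fin n)) x = x} = n := by
      simp only [Nat.card_eq_fintype_card]
      rw [Fintype.card_of_subtype univ (by simp [Perm.one_def])]
      simp
    omega
  exact Nat.card_of_isEmpty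

lemma stirlingCycle_eq_zero_of_lt {n k : ℕ} (h : n < k) : stirlingCycle n k = 0 := by
  rw [stirling_eq]
  haveI : IsEmpty {σ : Perm (Fin n) // ncyc σ = k} := by
    refine ⟨fun ⟨σ, hσ⟩ => ?_⟩
    have := ncyc_le σ
    rw [hσ, Fintype.card_fin] at this
    omega
  exact Nat.card_of_isEmpty

end Combinatorics

section Analysis
open Filter Finset

lemma stirling_sum_pow (k : ℕ) (x : ℝ) :
    ∑ m ∈ range (k + 1), (stirlingCycle k m : ℝ) * x ^ m = ∏ i ∈ range k, (x + i) := by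
  induction k with
  | zero => simp [stirlingCycle_zero_zero]
  | succ k ih =>
    have hk0 : (k : ℝ) * (stirlingCycle k 0 : ℝ) = 0 := by
      rcases Nat.eq_zero_or_pos k with h | h
      · simp [h]
      · simp [stirlingCycle_pos_zero k h]
    have hstep : ∀ m ∈ range (k + 1),
        (stirlingCycle (k + 1) (m + 1) : ℝ) * x ^ (m + 1)
          = (stirlingCycle k m : ℝ) * x ^ m * x
            + (k : ℝ) * ((stirlingCycle k (m + 1) : ℝ) * x ^ (m + 1)) := by
      intro m _
      rw [stirlingCycle_succ]
      push_cast
      ring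
    have hzero : (stirlingCycle (k + 1) 0 : ℝ) * x ^ 0 = 0 := by
      simp [stirlingCycle_pos_zero (k + 1) (Nat.succ_le_succ (Nat.zero_le k))]
    have hfull : ∑ m ∈ range (k + 2), (stirlingCycle k m : ℝ) * x ^ m
        = ∑ m ∈ range (k + 1), (stirlingCycle k m : ℝ) * x ^ m := by
      rw [Finset.sum_range_succ, stirlingCycle_eq_zero_of_lt (Nat.lt_succ_self k)]
      simp
    have hshift : ∑ m ∈ range (k + 1), (stirlingCycle k (m + 1) : ℝ) * x ^ (m + 1)
        = ∑ m ∈ range (k + 1), (stirlingCycle k m : ℝ) * x ^ m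
          - (stirlingCycle k 0 : ℝ) := by
      rw [← hfull]
      conv_rhs => rw [Finset.sum_range_succ']
      simp
    rw [Finset.prod_range_succ, ← ih, Finset.sum_range_succ', hzero, add_zero,
      Finset.sum_congr rfl hstep, Finset.sum_add_distrib, ← Finset.sum_mul, ← Finset.mul_sum,
      hshift, mul_sub, hk0]
    push_cast
    ring

lemma stirling_le_prod {k m : ℕ} (hm : m ≤ k) {x : ℝ} (hx : 0 < x) :
    (stirlingCycle k m : ℝ) * x ^ m ≤ ∏ i ∈ range k, (x + i) := by
  rw [← stirling_sum_pow]
  exact Finset.single_le_sum (f := fun m => (stirlingCycle k m : ℝ) * x ^ m)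
    (fun i _ => by positivity) (mem_range.2 (Nat.lt_succ_of_le hm))

lemma harmonic_shift_tendsto (c : ℝ) (hc : 0 < c) :
    Tendsto (fun j : ℕ => ∑ i ∈ range j, 1 / (c + i + 1)) atTop atTop := by
  have hmono : ∀ j : ℕ, (1 / (c + 1)) * ∑ i ∈ range j, 1 / ((i : ℝ) + 1)
      ≤ ∑ i ∈ range j, 1 / (c + i + 1) := by
    intro j
    rw [Finset.mul_sum]
    refine Finset.sum_le_sum fun i _ => ?_
    rw [div_mul_div_comm, one_mul]
    refine one_div_le_one_div_of_le (by positivity) ?_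
    have : (0:ℝ) ≤ c * i := by positivity
    push_cast
    nlinarith
  exact tendsto_atTop_mono hmono
    (Real.tendsto_sum_range_one_div_nat_succ_atTop.const_mul_atTop (by positivity))



variable {z : ℂ} (hz : 0 < z.re)

/-- abbreviation for the denominator product -/
noncomputable def Pz (z : ℂ) (k : ℕ) : ℂ := ∏ i ∈ range k, (z + (i + 1))

lemma Pz_succ (z : ℂ) (k : ℕ) : Pz z (k + 1) = Pz z k * (z + (k + 1)) :=
  prod_range_succ _ _

include hz

lemma factor_re (i : ℕ) : (z + (i + 1)).re = z.re + (i + 1) := by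
  simp [Complex.add_re]

lemma factor_ne (i : ℕ) : z + (i + 1) ≠ 0 := by
  intro h
  have := factor_re hz i
  rw [h] at this
  simp only [Complex.zero_re] at this
  have : (0:ℝ) < z.re + (i+1) := by positivity
  linarith [this]

lemma Pz_ne (k : ℕ) : Pz z k ≠ 0 :=
  Finset.prod_ne_zero_iff.2 fun i _ => factor_ne hz i

lemma norm_Pz_ge (k : ℕ) : ∏ i ∈ range k, (z.re + i + 1) ≤ ‖Pz z k‖ := by
  rw [Pz, norm_prod]
  refine Finset.prod_le_prod (fun i _ => by positivity) (fun i _ => ?_)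
  have h1 : (z + (i + 1)).re ≤ ‖z + (i + 1)‖ := by
    exact Complex.re_le_norm _
  rw [factor_re hz] at h1
  linarith

/-- The key telescoping identity. -/
lemma telescope (m N : ℕ) :
    z * ∑ k ∈ Ico (m + 1) (N + 1), (stirlingCycle k (m + 1) : ℂ) * (Pz z k)⁻¹
      = ∑ j ∈ Ico m N, (stirlingCycle j m : ℂ) * (Pz z j)⁻¹
        - N * (stirlingCycle N (m + 1) : ℂ) * (Pz z N)⁻¹ := by
  induction N with
  | zero =>
    rw [Finset.Ico_eq_empty (by omega), Finset.Ico_eq_empty (by omega)]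
    simp
  | succ N ih =>
    rcases lt_or_ge N m with h | h
    · rw [Finset.Ico_eq_empty (by omega), Finset.Ico_eq_empty (by omega)]
      rw [stirlingCycle_eq_zero_of_lt (by omega)]
      simp
    · rw [Finset.sum_Ico_succ_top (by omega) _, Finset.sum_Ico_succ_top h _, mul_add, ih]
      have hrec : (stirlingCycle (N + 1) (m + 1) : ℂ)
          = (stirlingCycle N m : ℂ) + N * (stirlingCycle N (m + 1) : ℂ) := by
        have := stirlingCycle_succ N m
        push_cast [this]
        ring
      have hkey : (z + ((N : ℂ) + 1)) * (Pz z (N + 1))⁻¹ = (Pz z N)⁻¹ := by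
        rw [Pz_succ, mul_inv, ← mul_assoc, mul_comm (z + ((N:ℂ)+1)), mul_assoc,
          mul_inv_cancel₀ (factor_ne hz N), mul_one]
      push_cast
      linear_combination (stirlingCycle (N + 1) (m + 1) : ℂ) * hkey + (Pz z N)⁻¹ * hrec



lemma rem_tendsto (m : ℕ) :
    Tendsto (fun N : ℕ => (N : ℂ) * (stirlingCycle N (m + 1) : ℂ) * (Pz z N)⁻¹)
      atTop (nhds 0) := by
  rw [tendsto_zero_iff_norm_tendsto_zero, ← tendsto_add_atTop_iff_nat 1]
  set x := z.re / 2 with hxdef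
  have hx : 0 < x := by positivity
  have h2x : z.re = 2 * x := by rw [hxdef]; ring
  set g : ℕ → ℝ := fun N =>
    x * (x ^ (m + 1))⁻¹ * Real.exp (-(x * ∑ i ∈ range N, 1 / (z.re + i + 1))) with hgdef
  have hgt : Tendsto g atTop (nhds 0) := by
    have h1 : Tendsto (fun N : ℕ => x * ∑ i ∈ range N, 1 / (z.re + i + 1)) atTop atTop :=
      (harmonic_shift_tendsto z.re hz).const_mul_atTop hx
    have h2 : Tendsto (fun N : ℕ => Real.exp (-(x * ∑ i ∈ range N, 1 / (z.re + i + 1))))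
        atTop (nhds 0) := Real.tendsto_exp_neg_atTop_nhds_zero.comp h1
    have := h2.const_mul (x * (x ^ (m + 1))⁻¹)
    simpa [hgdef] using this
  refine squeeze_zero' (Eventually.of_forall fun N => norm_nonneg _)
    (eventually_atTop.2 ⟨m, fun N hN => ?_⟩) hgt
  -- now the pointwise bound for m ≤ N
  set cR := (stirlingCycle (N + 1) (m + 1) : ℝ) with hcRdef
  have hcR0 : 0 ≤ cR := Nat.cast_nonneg _
  set D := ∏ i ∈ range N, (z.re + (i : ℝ) + 1) with hDdef
  set E := ∏ i ∈ range N, (x + (i : ℝ) + 1) with hEdef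
  have hD : 0 < D := Finset.prod_pos fun i _ => by positivity
  have hE : 0 < E := Finset.prod_pos fun i _ => by positivity
  have hzN : (0:ℝ) < z.re + N + 1 := by positivity
  have hnorm : ‖((N + 1 : ℕ) : ℂ) * (stirlingCycle (N + 1) (m + 1) : ℂ) * (Pz z (N + 1))⁻¹‖
      = ((N + 1 : ℕ) : ℝ) * cR * ‖Pz z (N + 1)‖⁻¹ := by
    rw [norm_mul, norm_mul, norm_inv, Complex.norm_natCast, Complex.norm_natCast]
  have hP1 : D * (z.re + N + 1) ≤ ‖Pz z (N + 1)‖ := by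
    have h := norm_Pz_ge hz (N + 1)
    rwa [prod_range_succ] at h
  have hPpos : (0:ℝ) < D * (z.re + N + 1) := by positivity
  have hPinv : ‖Pz z (N + 1)‖⁻¹ ≤ (D * (z.re + N + 1))⁻¹ := inv_anti₀ hPpos hP1
  have hprodx : ∏ i ∈ range (N + 1), (x + (i : ℝ)) = E * x := by
    rw [prod_range_succ']
    push_cast
    have : ∀ i ∈ range N, (x + ((i : ℝ) + 1)) = x + (i : ℝ) + 1 := fun i _ => by ring
    rw [Finset.prod_congr rfl this]
    simp [hEdef]
  have hcb : cR ≤ x * E * (x ^ (m + 1))⁻¹ := by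
    rw [← div_eq_mul_inv, le_div_iff₀ (pow_pos hx (m + 1))]
    calc cR * x ^ (m + 1) ≤ ∏ i ∈ range (N + 1), (x + (i : ℝ)) :=
          stirling_le_prod (by omega) hx
      _ = E * x := hprodx
      _ = x * E := mul_comm _ _
  have hexp : ∀ i ∈ range N, (x + (i : ℝ) + 1)
      ≤ (z.re + i + 1) * Real.exp (-(x / (z.re + i + 1))) := by
    intro i _
    have ht : (0:ℝ) < z.re + i + 1 := by positivity
    have h1 : -(x / (z.re + i + 1)) + 1 ≤ Real.exp (-(x / (z.re + i + 1))) :=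
      Real.add_one_le_exp _
    have h2 : (z.re + i + 1) * (-(x / (z.re + i + 1)) + 1) = x + i + 1 := by
      field_simp
      linarith [h2x]
    nlinarith
  have hED : E ≤ D * Real.exp (-(x * ∑ i ∈ range N, 1 / (z.re + i + 1))) := by
    calc E ≤ ∏ i ∈ range N, ((z.re + (i:ℝ) + 1) * Real.exp (-(x / (z.re + i + 1)))) :=
          Finset.prod_le_prod (fun i _ => by positivity) hexp
      _ = D * ∏ i ∈ range N, Real.exp (-(x / (z.re + i + 1))) := by
          rw [Finset.prod_mul_distrib]
      _ = D * Real.exp (∑ i ∈ range N, -(x / (z.re + i + 1))) := by rw [Real.exp_sum]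
      _ = D * Real.exp (-(x * ∑ i ∈ range N, 1 / (z.re + i + 1))) := by
          congr 1
          rw [Finset.mul_sum, ← Finset.sum_neg_distrib]
          exact congrArg Real.exp (Finset.sum_congr rfl fun i _ => by rw [mul_one_div])
  set e := Real.exp (-(x * ∑ i ∈ range N, 1 / (z.re + i + 1))) with hedef
  have he : 0 < e := Real.exp_pos _
  rw [hnorm]
  calc ((N + 1 : ℕ) : ℝ) * cR * ‖Pz z (N + 1)‖⁻¹
      ≤ ((N + 1 : ℕ) : ℝ) * (x * E * (x ^ (m + 1))⁻¹) * (D * (z.re + N + 1))⁻¹ := by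
        gcongr
    _ ≤ ((N + 1 : ℕ) : ℝ) * (x * (D * e) * (x ^ (m + 1))⁻¹) * (D * (z.re + N + 1))⁻¹ := by
        gcongr
    _ = (x * (x ^ (m + 1))⁻¹ * e) * (((N + 1 : ℕ) : ℝ) * (z.re + N + 1)⁻¹) * (D * D⁻¹) := by
        rw [mul_inv]
        ring
    _ = (x * (x ^ (m + 1))⁻¹ * e) * (((N + 1 : ℕ) : ℝ) * (z.re + N + 1)⁻¹) := by
        rw [mul_inv_cancel₀ hD.ne', mul_one]
    _ ≤ (x * (x ^ (m + 1))⁻¹ * e) * 1 := by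
        have : ((N + 1 : ℕ) : ℝ) * (z.re + N + 1)⁻¹ ≤ 1 := by
          rw [← div_eq_mul_inv, div_le_one hzN]
          push_cast
          linarith
        gcongr
    _ = g N := by rw [mul_one, hgdef]

set_option maxHeartbeats 1000000 in
lemma main_tendsto (m : ℕ) :
    Tendsto (fun N : ℕ => ∑ k ∈ Ico m N, (stirlingCycle k m : ℂ) * (Pz z k)⁻¹)
      atTop (nhds (z ^ (-(m : ℤ)))) := by
  induction m with
  | zero =>
    have heq : ∀ N ≥ 1, ∑ k ∈ Ico 0 N, (stirlingCycle k 0 : ℂ) * (Pz z k)⁻¹ = 1 := by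
      intro N hN
      rw [← Finset.range_eq_Ico, Finset.sum_eq_single 0]
      · simp [stirlingCycle_zero_zero, Pz]
      · intro k _ hk
        rw [stirlingCycle_pos_zero k (by omega)]
        simp
      · intro h
        exact absurd (mem_range.2 (by omega)) h
    have hval : z ^ (-((0:ℕ) : ℤ)) = 1 := by simp
    rw [hval]
    refine Tendsto.congr' ?_ tendsto_const_nhds
    exact (eventually_atTop.2 ⟨1, fun N hN => (heq N hN).symm⟩ : _)
  | succ m ih =>
    have hz0 : z ≠ 0 := by
      intro h
      rw [h] at hz
      simp at hz
    have h1 : Tendsto (fun N : ℕ =>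
        z * ∑ k ∈ Ico (m + 1) (N + 1), (stirlingCycle k (m + 1) : ℂ) * (Pz z k)⁻¹)
        atTop (nhds (z ^ (-(m : ℤ)))) := by
      have hsub := ih.sub (rem_tendsto hz m)
      rw [sub_zero] at hsub
      exact Tendsto.congr (fun N => (telescope hz m N).symm) hsub
    have h2 := h1.const_mul z⁻¹
    have h3 : Tendsto (fun N : ℕ =>
        ∑ k ∈ Ico (m + 1) (N + 1), (stirlingCycle k (m + 1) : ℂ) * (Pz z k)⁻¹)
        atTop (nhds (z⁻¹ * z ^ (-(m : ℤ)))) := by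
      refine Tendsto.congr (fun N => ?_) h2
      rw [← mul_assoc, inv_mul_cancel₀ hz0, one_mul]
    have hfinal := (tendsto_add_atTop_iff_nat
      (f := fun N : ℕ => ∑ k ∈ Ico (m + 1) N, (stirlingCycle k (m + 1) : ℂ) * (Pz z k)⁻¹) 1).1 h3
    have hval : z⁻¹ * z ^ (-(m : ℤ)) = z ^ (-((m + 1 : ℕ) : ℤ)) := by
      rw [show (-((m + 1 : ℕ) : ℤ)) = -(m : ℤ) - 1 by push_cast; ring,
        zpow_sub_one₀ hz0, mul_comm]
    rwa [hval] at hfinal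


end Analysis

/-- Stirling's identity for negative powers: for `m ≥ 1` and `Re z > 0`,
`∑_{k=m}^∞ c(k,m)/((z+1)(z+2)⋯(z+k)) = z^{-m}` (the series converges as the
limit of its partial sums). -/
theorem stmt_14 (m : ℕ) (hm : 1 ≤ m) (z : ℂ) (hz : 0 < z.re) :
    Filter.Tendsto
      (fun N : ℕ => ∑ k ∈ Finset.Ico m N,
        (stirlingCycle k m : ℂ) / ∏ i ∈ Finset.range k, (z + (i + 1)))
      Filter.atTop (nhds (z ^ (-(m : ℤ)))) := by
  refine Filter.Tendsto.congr (fun N => Finset.sum_congr rfl fun k _ => ?_) (main_tendsto hz m)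
  rw [div_eq_mul_inv, Pz]
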